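/- Let H ≥ 2 be an integer and I = {0,1,2} ∪ {2H}. Then for every integer h ≥ H, |hI| = H² + 2H(h - H + 1). -/

import Mathlib

open Finset Pointwise

/-- `hsum h A` is the `h`-fold sumset of `A` (pointwise sum of `h` copies). -/
def hsum (h : ℕ) (A : Finset ℤ) : Finset ℤ := ∑ _i ∈ Finset.range h, A

/-- `transl t A` is the translate `t + A`. -/
def transl (t : ℤ) (A : Finset ℤ) : Finset ℤ := A.image (t + ·)

noncomputable def DSet (H n : ℕ) : Finset ℤ :=
  (Finset.range (n+1)).biUnion
    (fun b => Finset.Icc (2*(H:ℤ)*b) (2*(H:ℤ)*b + 2*((n:ℤ) - b)))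

lemma mem_DSet {H n : ℕ} {x : ℤ} :
    x ∈ DSet H n ↔ ∃ b : ℤ, 0 ≤ b ∧ b ≤ (n:ℤ) ∧ 2*(H:ℤ)*b ≤ x ∧
      x ≤ 2*(H:ℤ)*b + 2*((n:ℤ) - b) := by
  simp only [DSet, Finset.mem_biUnion, Finset.mem_range, Finset.mem_Icc, Nat.lt_succ_iff]
  constructor
  · rintro ⟨b, hb, h1, h2⟩
    exact ⟨b, by positivity, by exact_mod_cast hb, h1, h2⟩
  · rintro ⟨b, hb0, hbn, h1, h2⟩
    refine ⟨b.toNat, by omega, ?_⟩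
    rw [Int.toNat_of_nonneg hb0]
    exact ⟨h1, h2⟩

lemma hsum_succ (n : ℕ) (A : Finset ℤ) : hsum (n+1) A = hsum n A + A := by
  simp only [hsum]
  rw [Finset.sum_range_succ]

lemma hsum_eq_DSet (H : ℕ) (n : ℕ) :
    hsum n ({0, 1, 2} ∪ {2 * (H : ℤ)}) = DSet H n := by
  induction n with
  | zero =>
      ext x
      simp only [hsum, Finset.range_zero, Finset.sum_empty, Finset.mem_zero, DSet]
      simp only [Nat.zero_add, Finset.mem_biUnion, Finset.mem_range, Finset.mem_Icc]
      constructor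
      · rintro rfl; exact ⟨0, by omega, by simp⟩
      · rintro ⟨b, hb, h1, h2⟩
        interval_cases b
        · simp at h1 h2; omega
  | succ n ih =>
      rw [hsum_succ, ih]
      ext x
      simp only [Finset.mem_add, mem_DSet, Finset.mem_union, Finset.mem_insert,
        Finset.mem_singleton]
      constructor
      · rintro ⟨y, ⟨b, hb0, hbn, h1, h2⟩, z, hz, rfl⟩
        rcases hz with (rfl | rfl | rfl) | rfl
        · exact ⟨b, hb0, by push_cast; linarith, by linarith, by push_cast; linarith⟩
        · exact ⟨b, hb0, by push_cast; linarith, by linarith, by push_cast; linarith⟩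
        · exact ⟨b, hb0, by push_cast; linarith, by linarith, by push_cast; linarith⟩
        · refine ⟨b+1, by linarith, by push_cast; linarith, ?_, ?_⟩
          · have e : 2*(H:ℤ)*(b+1) = 2*H*b + 2*H := by ring
            linarith
          · have e : 2*(H:ℤ)*(b+1) = 2*H*b + 2*H := by ring
            push_cast
            linarith
      · rintro ⟨b, hb0, hbn, h1, h2⟩
        push_cast at hbn h2
        by_cases hb : b ≤ (n:ℤ)
        · by_cases hx1 : x ≤ 2*(H:ℤ)*b + 2*((n:ℤ) - b)
          · exact ⟨x, ⟨b, hb0, hb, h1, hx1⟩, 0, by tauto, by ring⟩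
          · by_cases hx2 : x ≤ 2*(H:ℤ)*b + 2*((n:ℤ) - b) + 1
            · exact ⟨x - 1, ⟨b, hb0, hb, by linarith, by linarith⟩, 1, by tauto, by ring⟩
            · exact ⟨x - 2, ⟨b, hb0, hb, by linarith, by linarith⟩, 2, by tauto, by ring⟩
        · -- b = n + 1
          have hb' : b = (n:ℤ) + 1 := by omega
          subst hb'
          have e : 2*(H:ℤ)*((n:ℤ)+1) = 2*H*n + 2*H := by ring
          refine ⟨x - 2*(H:ℤ), ⟨(n:ℤ), by positivity, le_refl _, by linarith, by linarith⟩,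
            2*(H:ℤ), by tauto, by ring⟩

lemma sum_odd (n : ℕ) : ∑ j ∈ Finset.range n, (2*j+1) = n^2 := by
  induction n with
  | zero => simp
  | succ n ih => rw [Finset.sum_range_succ, ih]; ring

lemma DSet_card (H : ℕ) (hH : 2 ≤ H) (h : ℕ) (hhH : H ≤ h) :
    (DSet H h).card = H ^ 2 + 2 * H * (h - H + 1) := by
  have hHh : (H:ℤ) ≤ (h:ℤ) := by exact_mod_cast hhH
  have hH2 : (2:ℤ) ≤ (H:ℤ) := by exact_mod_cast hH
  set M : ℤ := 2*(H:ℤ)*((h:ℤ) - H + 1) + 2*((H:ℤ)-1) with hM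
  set F : Finset ℤ := (Finset.range (H-1)).biUnion
    (fun j => Finset.Icc (2*(H:ℤ)*((h:ℤ)-j)) (2*(H:ℤ)*((h:ℤ)-j) + 2*j)) with hF
  have hdecomp : DSet H h = Finset.Icc 0 M ∪ F := by
    ext x
    simp only [mem_DSet, Finset.mem_union, Finset.mem_Icc, hF, Finset.mem_biUnion,
      Finset.mem_range]
    constructor
    · rintro ⟨b, hb0, hbh, h1, h2⟩
      by_cases hcase : b ≤ (h:ℤ) - H + 1
      · left
        constructor
        · have : 0 ≤ 2*(H:ℤ)*b := by positivity
          linarith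
        · have e : 2*(H:ℤ)*((h:ℤ)-H+1) = 2*H*b + 2*H*(((h:ℤ)-H+1) - b) := by ring
          have e2 : 2*(((h:ℤ)-H+1) - b) ≤ 2*(H:ℤ)*(((h:ℤ)-H+1) - b) := by
            have h0 : (0:ℤ) ≤ ((h:ℤ)-H+1) - b := by linarith
            nlinarith
          rw [hM]; linarith
      · right
        refine ⟨((h:ℤ) - b).toNat, by omega, ?_⟩
        have e : (((h:ℤ) - b).toNat : ℤ) = (h:ℤ) - b := Int.toNat_of_nonneg (by linarith)
        rw [e]
        have e2 : (h:ℤ) - ((h:ℤ) - b) = b := by ring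
        rw [e2]
        exact ⟨h1, by linarith⟩
    · rintro (⟨hx0, hxM⟩ | ⟨j, hj, h1, h2⟩)
      · have hc : (0:ℤ) < 2*(H:ℤ) := by linarith
        have hqr : 2*(H:ℤ) * (x / (2*(H:ℤ))) + x % (2*(H:ℤ)) = x := Int.mul_ediv_add_emod x _
        set q : ℤ := x / (2*(H:ℤ)) with hq
        set r : ℤ := x % (2*(H:ℤ)) with hr
        have hr0 : 0 ≤ r := Int.emod_nonneg x (by linarith)
        have hrc : r < 2*(H:ℤ) := Int.emod_lt_of_pos x hc
        have hq0 : 0 ≤ q := Int.ediv_nonneg hx0 (by linarith)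
        by_cases hqh : q ≤ (h:ℤ) - H
        · exact ⟨q, hq0, by linarith, by linarith, by linarith⟩
        · refine ⟨(h:ℤ) - H + 1, by linarith, by linarith, ?_, ?_⟩
          · have : 2*(H:ℤ)*((h:ℤ)-H+1) ≤ 2*(H:ℤ)*q :=
              mul_le_mul_of_nonneg_left (by linarith) (by linarith)
            linarith
          · have e : 2*((h:ℤ) - ((h:ℤ)-H+1)) = 2*((H:ℤ)-1) := by ring
            rw [hM] at hxM
            linarith
      · refine ⟨(h:ℤ) - j, ?_, by linarith, h1, ?_⟩
        · have : (j:ℤ) < (H:ℤ) - 1 := by omega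
          linarith
        · have e : (h:ℤ) - ((h:ℤ) - j) = j := by ring
          rw [e]; linarith
  rw [hdecomp]
  have hdisj : Disjoint (Finset.Icc (0:ℤ) M) F := by
    rw [Finset.disjoint_left]
    rintro a haM haF
    rw [Finset.mem_Icc] at haM
    rw [hF, Finset.mem_biUnion] at haF
    obtain ⟨j, hj, ha⟩ := haF
    rw [Finset.mem_range] at hj
    rw [Finset.mem_Icc] at ha
    have hjH : (j:ℤ) ≤ (H:ℤ) - 2 := by omega
    have e : 2*(H:ℤ)*((h:ℤ)-j) = 2*H*((h:ℤ)-H+1) + 2*H*((H:ℤ)-1-j) := by ring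
    have e2 : 2*(H:ℤ) ≤ 2*(H:ℤ)*((H:ℤ)-1-j) := by nlinarith
    have := haM.2
    rw [hM] at this
    linarith
  rw [Finset.card_union_of_disjoint hdisj]
  have hcard1 : (Finset.Icc (0:ℤ) M).card = 2*H*(h-H+1) + 2*H - 1 := by
    rw [Int.card_Icc]
    have : M + 1 - 0 = M + 1 := by ring
    rw [this]
    have hhint : ((h - H + 1 : ℕ) : ℤ) = (h:ℤ) - H + 1 := by
      push_cast [Nat.cast_sub hhH]; ring
    have key : ((2*H*(h-H+1) + 2*H - 1 : ℕ) : ℤ) = 2*(H:ℤ)*((h:ℤ)-H+1) + 2*H - 1 := by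
      push_cast [Nat.cast_sub (by omega : 1 ≤ 2*H*(h-H+1) + 2*H), Nat.cast_sub hhH]
      ring
    have : M + 1 = ((2*H*(h-H+1) + 2*H - 1 : ℕ) : ℤ) := by rw [key, hM]; ring
    rw [this, Int.toNat_natCast]
  have hcard2 : F.card = (H-1)^2 := by
    rw [hF, Finset.card_biUnion]
    · have : ∀ j ∈ Finset.range (H-1),
          (Finset.Icc (2*(H:ℤ)*((h:ℤ)-j)) (2*(H:ℤ)*((h:ℤ)-j) + 2*j)).card = 2*j+1 := by
        intro j hj
        rw [Int.card_Icc]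
        have e : 2*(H:ℤ)*((h:ℤ)-j) + 2*j + 1 - 2*(H:ℤ)*((h:ℤ)-j) = 2*j+1 := by ring
        rw [e]
        omega
      rw [Finset.sum_congr rfl this, sum_odd]
    · intro a ha b hb hab
      rw [Finset.mem_coe, Finset.mem_range] at ha hb
      rw [Function.onFun, Finset.disjoint_left]
      rintro x hx1 hx2
      rw [Finset.mem_Icc] at hx1 hx2
      rcases hab.lt_or_gt with hlt | hlt
      · have haH : (a:ℤ) + 1 ≤ (b:ℤ) := by exact_mod_cast hlt
        have hbH : (b:ℤ) ≤ (H:ℤ) - 2 := by omega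
        have e : 2*(H:ℤ)*((h:ℤ)-a) = 2*H*((h:ℤ)-b) + 2*H*((b:ℤ)-a) := by ring
        have e2 : 2*(H:ℤ) ≤ 2*(H:ℤ)*((b:ℤ)-a) := by nlinarith
        linarith [hx1.1, hx2.2]
      · have haH : (b:ℤ) + 1 ≤ (a:ℤ) := by exact_mod_cast hlt
        have hbH : (a:ℤ) ≤ (H:ℤ) - 2 := by omega
        have e : 2*(H:ℤ)*((h:ℤ)-b) = 2*H*((h:ℤ)-a) + 2*H*((a:ℤ)-b) := by ring
        have e2 : 2*(H:ℤ) ≤ 2*(H:ℤ)*((a:ℤ)-b) := by nlinarith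
        linarith [hx1.2, hx2.1]
  rw [hcard1, hcard2]
  zify [hhH, (by omega : 1 ≤ H), (by omega : 1 ≤ 2*H*(h-H+1) + 2*H)]
  ring

theorem stmt_6 (H : ℕ) (hH : 2 ≤ H) (h : ℕ) (hhH : H ≤ h) :
    (hsum h ({0, 1, 2} ∪ {2 * (H : ℤ)})).card = H ^ 2 + 2 * H * (h - H + 1) := by
  rw [hsum_eq_DSet, DSet_card H hH h hhH]
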